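/- For every integer k ≥ 1 and every integer n ≥ 1: if k is even then 2·S_k(n) = (2n+1)^k − (2n−1)^k, and if k is odd then 2·S_k(n) = (2n+1)^k − (2n−1)^k + 2·(−1)^n. -/

import Mathlib

noncomputable def boxF (k n : ℕ) : Finset (Fin k → ℤ) :=
  Fintype.piFinset fun _ => Finset.Icc (-(n:ℤ)) n

noncomputable def EF (k n : ℕ) : Finset (Fin k → ℤ) :=
  (boxF k n).filter fun p => Even (∑ i, p i)

lemma card_boxF (k n : ℕ) : (boxF k n).card = (2*n+1)^k := by
  simp [boxF, Fintype.card_piFinset, Int.card_Icc]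
  congr 1
  omega

lemma key_sum (n : ℕ) : ∑ x ∈ Finset.Icc (-(n:ℤ)) n, (-1:ℤ)^x.natAbs = (-1)^n := by
  induction n with
  | zero => simp
  | succ n ih =>
    have hins : Finset.Icc (-((n:ℤ)+1)) ((n:ℤ)+1)
        = insert (-((n:ℤ)+1)) (insert ((n:ℤ)+1) (Finset.Icc (-(n:ℤ)) n)) := by
      ext x; simp [Finset.mem_Icc]; omega
    push_cast
    rw [hins, Finset.sum_insert (by intro h; simp [Finset.mem_insert, Finset.mem_Icc] at h; omega),
      Finset.sum_insert (by intro h; simp [Finset.mem_Icc] at h; try omega), ih]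
    have h1 : ((-((n:ℤ)+1))).natAbs = n+1 := by omega
    have h2 : (((n:ℤ)+1)).natAbs = n+1 := by omega
    rw [h1, h2]
    ring

lemma signed_sum (k n : ℕ) :
    ∑ p ∈ boxF k n, ∏ i, (-1:ℤ)^(p i).natAbs = ((-1:ℤ)^n)^k := by
  have h := Finset.prod_univ_sum (fun _ : Fin k => Finset.Icc (-(n:ℤ)) n)
    (fun _ x => (-1:ℤ)^x.natAbs)
  rw [boxF, ← h]
  simp [key_sum]

lemma parity_iff (k : ℕ) (p : Fin k → ℤ) :
    Even (∑ i, (p i).natAbs) ↔ Even (∑ i, p i) := by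
  rw [← Int.even_coe_nat]
  push_cast
  have he : Even ((∑ i, |p i|) - (∑ i, p i)) := by
    rw [← Finset.sum_sub_distrib]
    apply Finset.even_sum
    intro i _
    rcases abs_choice (p i) with h | h <;> rw [h]
    · simp
    · exact ⟨-(p i), by ring⟩
  constructor
  · intro hh; have := hh.sub he; simpa using this
  · intro hh; have := he.add hh; simpa using this

lemma two_EF (k n : ℕ) :
    2 * ((EF k n).card : ℤ) = (2*(n:ℤ)+1)^k + ((-1:ℤ)^n)^k := by
  have hsplit := Finset.sum_filter_add_sum_filter_not (boxF k n)
    (fun p => Even (∑ i, p i)) (fun p => ∏ i, (-1:ℤ)^(p i).natAbs)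
  have h1 : ∑ p ∈ (boxF k n).filter (fun p => Even (∑ i, p i)),
      ∏ i, (-1:ℤ)^(p i).natAbs = ((EF k n).card : ℤ) := by
    rw [EF, Finset.sum_congr rfl (fun p hp => ?_), Finset.sum_const, nsmul_eq_mul, mul_one]
    rw [Finset.mem_filter] at hp
    rw [Finset.prod_pow_eq_pow_sum]
    exact Even.neg_one_pow ((parity_iff k p).2 hp.2)
  have h2 : ∑ p ∈ (boxF k n).filter (fun p => ¬ Even (∑ i, p i)),
      ∏ i, (-1:ℤ)^(p i).natAbs
      = -(((boxF k n).card : ℤ) - ((EF k n).card : ℤ)) := by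
    rw [Finset.sum_congr rfl (fun p hp => ?_), Finset.sum_const, nsmul_eq_mul, mul_neg_one]
    · congr 1
      have := Finset.card_filter_add_card_filter_not (s := boxF k n)
        (p := fun p => Even (∑ i, p i))
      rw [EF]
      push_cast [← this]
      ring
    · rw [Finset.mem_filter] at hp
      rw [Finset.prod_pow_eq_pow_sum]
      exact Odd.neg_one_pow (Nat.not_even_iff_odd.1
        (fun he => hp.2 ((parity_iff k p).1 he)))
  rw [h1, h2, signed_sum] at hsplit
  have hb : ((boxF k n).card : ℤ) = (2*(n:ℤ)+1)^k := by
    rw [card_boxF]; push_cast; ring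
  rw [← hsplit, hb]
  ring

lemma EF_subset (k n : ℕ) : EF k n ⊆ EF k (n+1) := by
  apply Finset.filter_subset_filter
  exact Fintype.piFinset_subset _ _ (fun _ => Finset.Icc_subset_Icc (by push_cast; omega) (by push_cast; omega))

/-- `S k n` : the number of vectors `p ∈ ℤ^k` with `max_i |p i| = n`
(i.e. `|p i| ≤ n` for all `i` and `|p i| = n` for some `i`)
and even coordinate sum. -/
noncomputable def S (k n : ℕ) : ℕ :=
  Nat.card {p : Fin k → ℤ //
    (∀ i, |p i| ≤ (n : ℤ)) ∧ (∃ i, |p i| = (n : ℤ)) ∧ Even (∑ i, p i)}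

lemma S_eq (k n : ℕ) (hn : 1 ≤ n) : S k n = (EF k n \ EF k (n-1)).card := by
  have hset : {p : Fin k → ℤ | (∀ i, |p i| ≤ (n : ℤ)) ∧ (∃ i, |p i| = (n : ℤ))
      ∧ Even (∑ i, p i)} = ↑(EF k n \ EF k (n-1)) := by
    ext p
    have hc : ((n-1 : ℕ) : ℤ) = (n:ℤ) - 1 := by push_cast [hn]; ring
    simp only [EF, boxF, Finset.coe_sdiff, Set.mem_diff, Finset.mem_coe, Finset.mem_filter,
      Fintype.mem_piFinset, Finset.mem_Icc, Set.mem_setOf_eq, hc, ← abs_le]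
    constructor
    · rintro ⟨hle, ⟨i, hi⟩, hev⟩
      refine ⟨⟨hle, hev⟩, ?_⟩
      rintro ⟨hle', -⟩
      have := hle' i
      omega
    · rintro ⟨⟨hle, hev⟩, hnot⟩
      refine ⟨hle, ?_, hev⟩
      by_contra hno
      push_neg at hno
      exact hnot ⟨fun i => by have := hle i; have := hno i; omega, hev⟩
  have : S k n = Nat.card {p : Fin k → ℤ | (∀ i, |p i| ≤ (n : ℤ)) ∧ (∃ i, |p i| = (n : ℤ))
      ∧ Even (∑ i, p i)} := rfl
  rw [this, hset, Nat.card_coe_set_eq, Set.ncard_coe_finset]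

theorem S_formula (k n : ℕ) (hk : 1 ≤ k) (hn : 1 ≤ n) :
    (Even k → 2 * (S k n : ℤ) = (2 * (n : ℤ) + 1) ^ k - (2 * (n : ℤ) - 1) ^ k) ∧
    (Odd k → 2 * (S k n : ℤ) =
      (2 * (n : ℤ) + 1) ^ k - (2 * (n : ℤ) - 1) ^ k + 2 * (-1) ^ n) := by
  have hsub : EF k (n-1) ⊆ EF k n := by
    have := EF_subset k (n-1)
    rwa [Nat.sub_add_cancel hn] at this
  have hcard : (S k n : ℤ) = ((EF k n).card : ℤ) - ((EF k (n-1)).card : ℤ) := by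
    rw [S_eq k n hn, Finset.card_sdiff_of_subset hsub]
    push_cast [Finset.card_le_card hsub]
    ring
  have h1 := two_EF k n
  have h2 := two_EF k (n-1)
  have hc : ((n-1 : ℕ) : ℤ) = (n:ℤ) - 1 := by push_cast [hn]; ring
  rw [hc] at h2
  rw [show (2:ℤ)*((n:ℤ)-1)+1 = 2*(n:ℤ)-1 from by ring] at h2
  have hmain : 2 * (S k n : ℤ) =
      (2*(n:ℤ)+1)^k - (2*(n:ℤ)-1)^k + ((-1:ℤ)^n)^k - ((-1:ℤ)^(n-1))^k := by
    rw [hcard]; linarith [h1, h2]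
  have hneg : ((-1:ℤ)^(n-1)) = -(-1:ℤ)^n := by
    have h : (-1:ℤ)^n = (-1)^(n-1) * (-1) := by
      rw [← pow_succ, Nat.sub_add_cancel hn]
    rw [h]; ring
  constructor
  · intro hke
    rw [hmain, hneg]
    have e1 : ((-1:ℤ)^n)^k = 1 := by
      rw [← pow_mul, mul_comm, pow_mul]
      rw [hke.neg_one_pow, one_pow]
    have e2 : ((-(-1:ℤ)^n))^k = 1 := by
      rcases Nat.even_or_odd n with h | h
      · rw [h.neg_one_pow]; simp [hke.neg_one_pow]
      · rw [h.neg_one_pow]; simp [hke.neg_one_pow]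
    rw [e1, e2]; ring
  · intro hko
    rw [hmain, hneg]
    have e1 : ((-1:ℤ)^n)^k = (-1:ℤ)^n := by
      rcases Nat.even_or_odd n with h | h
      · rw [h.neg_one_pow, one_pow]
      · rw [h.neg_one_pow, hko.neg_one_pow]
    have e2 : ((-(-1:ℤ)^n))^k = -(-1:ℤ)^n := by
      rcases Nat.even_or_odd n with h | h
      · rw [h.neg_one_pow]; simp [hko.neg_one_pow]
      · rw [h.neg_one_pow]; simp
    rw [e1, e2]; ring
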